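/- Fix an integer n ≥ 1 and let g̃₊, g̃₋, σ, F̃ be as defined. Then F̃ has no critical points in the region where F̃ ≥ 0: for every (s, t) ∈ ℝ², if ∂F̃/∂s(s,t) = 0 and ∂F̃/∂t(s,t) = 0, then F̃(s,t) < 0. -/

import Mathlib

/-- The twisted end function `g̃₊`: equal to `1` on `[0, π]` and to `cos (2s)` otherwise. -/
noncomputable def gTildePlus (s : ℝ) : ℝ :=
  if 0 ≤ s ∧ s ≤ Real.pi then 1 else Real.cos (2 * s)

/-- The twisted end function `g̃₋`: equal to `1` on `[0, π/2]`, to `cos (4ns)` on `(π/2, π]`,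
and to `cos (2s)` otherwise. -/
noncomputable def gTildeMinus (n : ℕ) (s : ℝ) : ℝ :=
  if 0 ≤ s ∧ s ≤ Real.pi / 2 then 1
  else if Real.pi / 2 < s ∧ s ≤ Real.pi then Real.cos (4 * n * s)
  else Real.cos (2 * s)

/-- The twisted interpolating function `F̃(s,t) = eᵗ·[(1 − σ(t))·g̃₋(s) + σ(t)·g̃₊(s)]`. -/
noncomputable def Ftilde (n : ℕ) (σ : ℝ → ℝ) (s t : ℝ) : ℝ :=
  Real.exp t * ((1 - σ t) * gTildeMinus n s + σ t * gTildePlus s)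

lemma gTilde_le (n : ℕ) (s : ℝ) : gTildeMinus n s ≤ gTildePlus s := by
  unfold gTildeMinus gTildePlus
  rcases le_or_gt s (Real.pi / 2) with h1 | h1
  · rcases le_or_gt 0 s with h0 | h0
    · rw [if_pos ⟨h0, h1⟩, if_pos ⟨h0, h1.trans (by linarith [Real.pi_pos])⟩]
    · rw [if_neg (by push_neg; intro h; linarith), if_neg (by push_neg; intro h; linarith),
        if_neg (by push_neg; intro h; linarith)]
  · rcases le_or_gt s Real.pi with h2 | h2
    · rw [if_neg (by push_neg; intro _; linarith), if_pos ⟨h1, h2⟩,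
        if_pos ⟨by linarith [Real.pi_pos], h2⟩]
      exact Real.cos_le_one _
    · rw [if_neg (by push_neg; intro _; linarith), if_neg (by push_neg; intro _; linarith),
        if_neg (by push_neg; intro _; linarith)]

/-- The twisted interpolating function `F̃` has no critical points in the region where
`F̃ ≥ 0`: if both partial derivatives of `F̃` vanish at `(s, t)`, then `F̃(s, t) < 0`. -/
theorem Ftilde_neg_of_critical (n : ℕ) (hn : 1 ≤ n) (σ : ℝ → ℝ)
    (hσ : ContDiff ℝ 1 σ) (hmono : Monotone σ)
    (hbd : ∀ t, 0 ≤ σ t ∧ σ t ≤ 1)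
    (hpos : ∀ t, 0 < σ t → σ t < 1 → 0 < deriv σ t)
    (s t : ℝ)
    (hs : deriv (fun s' => Ftilde n σ s' t) s = 0)
    (ht : deriv (fun t' => Ftilde n σ s t') t = 0) :
    Ftilde n σ s t < 0 := by
  have hexp : (0:ℝ) < Real.exp t := Real.exp_pos t
  set A := gTildeMinus n s with hA
  set B := gTildePlus s with hB
  set d := deriv σ t with hd_def
  have hdiff : DifferentiableAt ℝ σ t := (hσ.differentiable one_ne_zero).differentiableAt
  have hd : HasDerivAt σ d t := hdiff.hasDerivAt
  -- deriv in t
  have hDt : HasDerivAt (fun t' => Ftilde n σ s t')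
      (Real.exp t * ((1 - σ t) * A + σ t * B) + Real.exp t * ((-d) * A + d * B)) t := by
    have h1 : HasDerivAt (fun t' => (1 - σ t') * A + σ t' * B) ((-d) * A + d * B) t := by
      have := (((hasDerivAt_const t (1:ℝ)).sub hd).mul_const A).add (hd.mul_const B)
      convert this using 1
      · rfl
      · rfl
      · funext x; simp
      · ring
    have := (Real.hasDerivAt_exp t).mul h1
    simpa [Ftilde, Pi.mul_def] using this
  have ht' : Real.exp t * ((1 - σ t) * A + σ t * B) + Real.exp t * ((-d) * A + d * B) = 0 := by
    rw [← hDt.deriv]; exact ht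
  -- d ≥ 0 from monotonicity
  have hd0 : 0 ≤ d := by
    have hslope : Filter.Tendsto (slope σ t) (nhdsWithin t (Set.Ioi t)) (nhds d) :=
      (hasDerivAt_iff_tendsto_slope.mp hd).mono_left
        (nhdsWithin_mono t fun y hy => (Set.mem_Ioi.mp hy).ne')
    refine ge_of_tendsto hslope ?_
    filter_upwards [self_mem_nhdsWithin] with y hy
    have hty : t < y := hy
    rw [slope_def_field]
    exact div_nonneg (sub_nonneg.2 (hmono hty.le)) (sub_nonneg.2 hty.le)
  have hBA : 0 ≤ B - A := sub_nonneg.2 (gTilde_le n s)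
  -- F̃ ≤ 0
  have hF : Ftilde n σ s t = - (Real.exp t * (d * (B - A))) := by
    have : Ftilde n σ s t = Real.exp t * ((1 - σ t) * A + σ t * B) := rfl
    rw [this]; nlinarith [ht']
  have hFle : Ftilde n σ s t ≤ 0 := by
    rw [hF]
    have : 0 ≤ Real.exp t * (d * (B - A)) := by positivity
    linarith
  rcases lt_or_eq_of_le hFle with h | h
  · exact h
  exfalso
  -- F̃ = 0 : derive contradictions
  have hFz : Real.exp t * ((1 - σ t) * A + σ t * B) = 0 := h
  have hsum : (1 - σ t) * A + σ t * B = 0 :=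
    (mul_eq_zero.mp hFz).resolve_left (ne_of_gt hexp)
  have hdBA : d * (B - A) = 0 := by
    have h2 : Real.exp t * (d * (B - A)) = 0 := by
      have h3 := hF; rw [h] at h3; linarith
    exact (mul_eq_zero.mp h2).resolve_left (ne_of_gt hexp)
  have hσ0 := (hbd t).1
  have hσ1 := (hbd t).2
  have hpi := Real.pi_pos
  by_cases hmid : Real.pi / 2 < s ∧ s ≤ Real.pi
  · -- middle region: A = cos(4ns), B = 1
    have hAv : A = Real.cos (4 * n * s) := by
      rw [hA, gTildeMinus, if_neg (by push_neg; intro _; linarith [hmid.1]), if_pos hmid]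
    have hBv : B = 1 := by
      rw [hB, gTildePlus, if_pos ⟨by linarith [hmid.1], hmid.2⟩]
    set c := Real.cos (4 * n * s) with hc
    have hc1 : c ≤ 1 := Real.cos_le_one _
    have hsum' : (1 - σ t) * c + σ t = 0 := by rw [hAv, hBv] at hsum; linarith
    have hcne : c ≠ 1 := by
      intro hcc; rw [hcc] at hsum'; nlinarith
    have hdz : d = 0 := by
      rcases mul_eq_zero.mp hdBA with h' | h'
      · exact h'
      · rw [hAv, hBv] at h'; exact absurd (by linarith : c = 1) hcne
    have hσval : σ t = 0 := by
      by_contra hσne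
      have hσpos : 0 < σ t := lt_of_le_of_ne hσ0 (Ne.symm hσne)
      rcases lt_or_eq_of_le hσ1 with h1' | h1'
      · exact absurd (hpos t hσpos h1') (by rw [← hd_def, hdz]; exact lt_irrefl 0)
      · rw [h1'] at hsum'; nlinarith
    have hcz : c = 0 := by rw [hσval] at hsum'; linarith
    -- s ≠ π since cos(4nπ) = 1
    have hsne : s < Real.pi := by
      rcases lt_or_eq_of_le hmid.2 with h' | h'
      · exact h'
      · exfalso
        have : c = 1 := by
          rw [hc, h']
          have : (4 : ℝ) * n * Real.pi = (2 * n : ℕ) * (2 * Real.pi) := by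
            push_cast; ring
          rw [this, Real.cos_nat_mul_two_pi]
        exact hcne this
    -- local formula for F̃ in s
    have hev : (fun s' => Ftilde n σ s' t) =ᶠ[nhds s]
        (fun s' => Real.exp t * Real.cos (4 * n * s')) := by
      have hU : Set.Ioo (Real.pi / 2) Real.pi ∈ nhds s :=
        isOpen_Ioo.mem_nhds ⟨hmid.1, hsne⟩
      filter_upwards [hU] with s' hs'
      have hm : gTildeMinus n s' = Real.cos (4 * n * s') := by
        rw [gTildeMinus, if_neg (by push_neg; intro _; linarith [hs'.1]),
          if_pos ⟨hs'.1, hs'.2.le⟩]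
      rw [Ftilde, hm, hσval]
      ring
    have hds : HasDerivAt (fun s' => Real.exp t * Real.cos (4 * n * s'))
        (Real.exp t * (-Real.sin (4 * n * s) * (4 * n))) s := by
      have h1 : HasDerivAt (fun s' : ℝ => (4 * n : ℝ) * s') (4 * n) s := by
        simpa using (hasDerivAt_id s).const_mul (4 * (n:ℝ))
      exact ((Real.hasDerivAt_cos (4 * n * s)).comp s h1).const_mul (Real.exp t)
    have hz : Real.exp t * (-Real.sin (4 * n * s) * (4 * n)) = 0 := by
      rw [← hds.deriv, ← hev.deriv_eq]; exact hs
    have hsin : Real.sin (4 * n * s) = 0 := by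
      have hn' : (0:ℝ) < 4 * n := by positivity
      rcases mul_eq_zero.mp hz with h' | h'
      · exact absurd h' (ne_of_gt hexp)
      · rcases mul_eq_zero.mp h' with h'' | h''
        · linarith [neg_eq_zero.mp h'']
        · linarith
    have := Real.sin_sq_add_cos_sq (4 * n * s)
    rw [hsin, ← hc, hcz] at this
    norm_num at this
  · -- outside middle region: A = B
    by_cases hleft : 0 ≤ s ∧ s ≤ Real.pi / 2
    · have hAv : A = 1 := by rw [hA, gTildeMinus, if_pos hleft]
      have hBv : B = 1 := by
        rw [hB, gTildePlus, if_pos ⟨hleft.1, by linarith [hleft.2]⟩]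
      rw [hAv, hBv] at hsum; nlinarith
    · -- s < 0 or s > π
      have hout : s < 0 ∨ Real.pi < s := by
        by_contra hcon
        push_neg at hcon
        obtain ⟨h1', h2'⟩ := hcon
        rcases le_or_gt s (Real.pi / 2) with h3 | h3
        · exact hleft ⟨h1', h3⟩
        · exact hmid ⟨h3, h2'⟩
      have hAv : A = Real.cos (2 * s) := by
        rw [hA, gTildeMinus]
        rcases hout with h' | h'
        · rw [if_neg (by push_neg; intro h''; linarith),
            if_neg (by push_neg; intro h''; linarith)]
        · rw [if_neg (by push_neg; intro _; linarith),
            if_neg (by push_neg; intro _; linarith)]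
      have hBv : B = Real.cos (2 * s) := by
        rw [hB, gTildePlus]
        rcases hout with h' | h'
        · rw [if_neg (by push_neg; intro h''; linarith)]
        · rw [if_neg (by push_neg; intro _; linarith)]
      have hcos : Real.cos (2 * s) = 0 := by
        rw [hAv, hBv] at hsum; nlinarith
      -- local formula
      have hev : (fun s' => Ftilde n σ s' t) =ᶠ[nhds s]
          (fun s' => Real.exp t * Real.cos (2 * s')) := by
        have hU : {s' : ℝ | s' < 0 ∨ Real.pi < s'} ∈ nhds s := by
          have : IsOpen {s' : ℝ | s' < 0 ∨ Real.pi < s'} :=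
            isOpen_lt continuous_id continuous_const |>.union
              (isOpen_lt continuous_const continuous_id)
          exact this.mem_nhds hout
        filter_upwards [hU] with s' hs'
        have hm : gTildeMinus n s' = Real.cos (2 * s') := by
          rw [gTildeMinus]
          rcases hs' with h' | h'
          · rw [if_neg (by push_neg; intro h''; linarith),
              if_neg (by push_neg; intro h''; linarith)]
          · rw [if_neg (by push_neg; intro _; linarith),
              if_neg (by push_neg; intro _; linarith)]
        have hp : gTildePlus s' = Real.cos (2 * s') := by
          rw [gTildePlus]
          rcases hs' with h' | h'
          · rw [if_neg (by push_neg; intro h''; linarith)]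
          · rw [if_neg (by push_neg; intro _; linarith)]
        rw [Ftilde, hm, hp]
        ring
      have hds : HasDerivAt (fun s' => Real.exp t * Real.cos (2 * s'))
          (Real.exp t * (-Real.sin (2 * s) * 2)) s := by
        have h1 : HasDerivAt (fun s' : ℝ => (2:ℝ) * s') 2 s := by
          simpa using (hasDerivAt_id s).const_mul (2:ℝ)
        exact ((Real.hasDerivAt_cos (2 * s)).comp s h1).const_mul (Real.exp t)
      have hz : Real.exp t * (-Real.sin (2 * s) * 2) = 0 := by
        rw [← hds.deriv, ← hev.deriv_eq]; exact hs
      have hsin : Real.sin (2 * s) = 0 := by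
        rcases mul_eq_zero.mp hz with h' | h'
        · exact absurd h' (ne_of_gt hexp)
        · rcases mul_eq_zero.mp h' with h'' | h''
          · linarith [neg_eq_zero.mp h'']
          · norm_num at h''
      have := Real.sin_sq_add_cos_sq (2 * s)
      rw [hsin, hcos] at this
      norm_num at this
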